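/- Let G' be a minimal DAG for sources S1',...,S_{n-1}' and terminals T1', T2' (max-flow(Si',Tj')=1 for all i,j, and minimal with respect to edge removal), and let u be a vertex of G' lying on some source-terminal path. If P is a new path entering G' for the first time at u, and G^{(u)} denotes the union over all sources Si' having a path to u (in G' ∪ P) of the unique path from Si' to u, then removing G^{(u)} from G' ∪ P preserves, for every source Si' not in this set, the existence of paths from Si' to both T1' and T2', and preserves the existence of paths from u to both terminals (before removal had them). -/

import Mathlib

/-- A walk in the digraph with adjacency relation `A`, given as a list of directed
edges (ordered pairs of vertices). -/
def IsWalk {V : Type*} (A : V → V → Prop) : V → List (V × V) → V → Prop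
  | u, [], w => u = w
  | u, e :: es, w => e.1 = u ∧ A e.1 e.2 ∧ IsWalk A e.2 es w

/-- The vertices visited by a walk starting at `u` with edge list `l`. -/
def walkVerts {V : Type*} (u : V) (l : List (V × V)) : List V := u :: l.map Prod.snd

/-- The digraph `A` is acyclic (no nonempty closed walk). -/
def IsAcyclic {V : Type*} (A : V → V → Prop) : Prop :=
  ∀ (v : V) (l : List (V × V)), l ≠ [] → ¬ IsWalk A v l v

/-- The max-flow from `s` to `t` in a unit-capacity digraph: the largest number of
pairwise edge-disjoint directed paths from `s` to `t`. -/
noncomputable def maxFlow {V : Type*} (A : V → V → Prop) (s t : V) : ℕ :=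
  sSup {k | ∃ f : Fin k → List (V × V), (∀ i, IsWalk A s (f i) t) ∧
    ∀ i j, i ≠ j → ∀ e, e ∈ f i → e ∉ f j}


lemma isWalk_append {V : Type*} {A : V → V → Prop} :
    ∀ {x : V} {l : List (V × V)} {m : List (V × V)} {y z : V},
    IsWalk A x l y → IsWalk A y m z → IsWalk A x (l ++ m) z := by
  intro x l
  induction l generalizing x with
  | nil =>
    intro m y z h1 h2
    cases h1
    exact h2
  | cons e es ih =>
    intro m y z h1 h2
    exact ⟨h1.1, h1.2.1, ih h1.2.2 h2⟩

lemma isWalk_split {V : Type*} {A : V → V → Prop} {a b : V} :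
    ∀ {x : V} {l : List (V × V)} {y : V}, IsWalk A x l y → (a, b) ∈ l →
    ∃ l1 l2, l = l1 ++ (a, b) :: l2 ∧ IsWalk A x (l1 ++ [(a, b)]) b ∧ IsWalk A b l2 y := by
  intro x l
  induction l generalizing x with
  | nil => simp [IsWalk]
  | cons e es ih =>
    intro y h hm
    rcases List.mem_cons.1 hm with h1 | h1
    · subst h1
      exact ⟨[], es, rfl, ⟨h.1, h.2.1, rfl⟩, h.2.2⟩
    · obtain ⟨l1, l2, heq, hw1, hw2⟩ := ih h.2.2 h1
      exact ⟨e :: l1, l2, by rw [heq]; rfl, ⟨h.1, h.2.1, hw1⟩, hw2⟩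

lemma isWalk_mono {V : Type*} {A B : V → V → Prop} (h : ∀ a b, A a b → B a b) :
    ∀ {x : V} {l : List (V × V)} {y : V}, IsWalk A x l y → IsWalk B x l y := by
  intro x l
  induction l generalizing x with
  | nil => intro y h1; exact h1
  | cons e es ih => intro y h1; exact ⟨h1.1, h _ _ h1.2.1, ih h1.2.2⟩

lemma isWalk_restrict {V : Type*} {A G : V → V → Prop} :
    ∀ {x : V} {l : List (V × V)} {y : V}, IsWalk A x l y →
    (∀ e ∈ l, ¬ G e.1 e.2) → IsWalk (fun a b => A a b ∧ ¬ G a b) x l y := by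
  intro x l
  induction l generalizing x with
  | nil => intro y h1 _; exact h1
  | cons e es ih =>
    intro y h1 h2
    exact ⟨h1.1, ⟨h1.2.1, h2 e List.mem_cons_self⟩,
      ih h1.2.2 fun e' he' => h2 e' (List.mem_cons_of_mem _ he')⟩

lemma exists_walk_of_maxFlow_eq_one {V : Type*} (A : V → V → Prop) (s t : V)
    (h : maxFlow A s t = 1) : ∃ Q, IsWalk A s Q t := by
  by_contra hc
  push_neg at hc
  have hset : {k | ∃ f : Fin k → List (V × V), (∀ i, IsWalk A s (f i) t) ∧
      ∀ i j, i ≠ j → ∀ e, e ∈ f i → e ∉ f j} = {0} := by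
    ext k
    simp only [Set.mem_setOf_eq, Set.mem_singleton_iff]
    constructor
    · rintro ⟨f, hf, -⟩
      by_contra hk
      exact hc (f ⟨0, Nat.pos_of_ne_zero hk⟩) (hf _)
    · rintro rfl
      exact ⟨Fin.elim0, fun i => i.elim0, fun i => i.elim0⟩
  rw [maxFlow, hset, csSup_singleton] at h
  exact one_ne_zero h.symm

/-- Let `A` be a minimal DAG for sources `S i` and terminals
`T 0, T 1` (all max-flows equal `1`, and deleting any edge makes some max-flow `0`), and
let `u` be a vertex of `A` lying on a source–terminal path.  Let `P` be a new path (edge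
list, from `w` to `u`) entering `A` for the first time at `u`: its edges are not edges
of `A` and none of its vertices except `u` is a vertex of `A`.  Write `B = A ∪ P`, and
suppose (as in the construction) `B` is acyclic and each source with a path to `u` in
`B` has a unique such path.  Let `Gu` consist of the edges lying on some source-to-`u`
path in `B`, and let `B⁻ = B − Gu`.  Then: every source with no path to `u` still has
paths to both terminals in `B⁻`, and if `u` had paths in `B` to the terminals, it still
has them in `B⁻`. -/
theorem removing_paths_into_u_preserves_connectivity
    {V : Type*} [Fintype V] (A : V → V → Prop)
    (n : ℕ) (S : Fin n → V) (T : Fin 2 → V)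
    (hflow : ∀ i j, maxFlow A (S i) (T j) = 1)
    (hmin : ∀ a b, A a b →
      ∃ i j, maxFlow (fun x y => A x y ∧ ¬(x = a ∧ y = b)) (S i) (T j) = 0)
    (u w : V)
    (hu : ∃ (i : Fin n) (j : Fin 2) (Q R : List (V × V)),
      IsWalk A (S i) Q u ∧ IsWalk A u R (T j))
    (P : List (V × V))
    (hPchain : IsWalk (fun _ _ => True) w P u)
    (hPnew : ∀ e ∈ P, ¬ A e.1 e.2)
    (hPverts : ∀ x ∈ walkVerts w P, x ≠ u → ¬ ∃ y, A x y ∨ A y x)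
    (B : V → V → Prop) (hB : ∀ a b, B a b ↔ (A a b ∨ (a, b) ∈ P))
    (hBacyc : IsAcyclic B)
    (huniq : ∀ i, (∃ Q, IsWalk B (S i) Q u) → ∃! Q, IsWalk B (S i) Q u)
    (Gu : V → V → Prop)
    (hGu : ∀ a b, Gu a b ↔ ∃ (i : Fin n) (Q : List (V × V)),
      IsWalk B (S i) Q u ∧ (a, b) ∈ Q) :
    (∀ i, (¬ ∃ Q, IsWalk B (S i) Q u) →
      ∀ j, ∃ Q, IsWalk (fun a b => B a b ∧ ¬ Gu a b) (S i) Q (T j)) ∧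
    (∀ j, (∃ Q, IsWalk B u Q (T j)) →
      ∃ Q, IsWalk (fun a b => B a b ∧ ¬ Gu a b) u Q (T j)) := by
  constructor
  · intro i hi j
    obtain ⟨Q, hQ⟩ := exists_walk_of_maxFlow_eq_one A (S i) (T j) (hflow i j)
    have hQB : IsWalk B (S i) Q (T j) :=
      isWalk_mono (fun a b hab => (hB a b).2 (Or.inl hab)) hQ
    refine ⟨Q, isWalk_restrict hQB ?_⟩
    rintro ⟨a, b⟩ he hGab
    obtain ⟨i', R, hR, hmem⟩ := (hGu a b).1 hGab
    obtain ⟨l1, l2, -, hw1, -⟩ := isWalk_split hQB he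
    obtain ⟨r1, r2, -, -, hr2⟩ := isWalk_split hR hmem
    exact hi ⟨_, isWalk_append hw1 hr2⟩
  · rintro j ⟨Q, hQ⟩
    refine ⟨Q, isWalk_restrict hQ ?_⟩
    rintro ⟨a, b⟩ he hGab
    obtain ⟨i', R, hR, hmem⟩ := (hGu a b).1 hGab
    obtain ⟨l1, l2, -, hw1, -⟩ := isWalk_split hQ he
    obtain ⟨r1, r2, -, -, hr2⟩ := isWalk_split hR hmem
    exact hBacyc u ((l1 ++ [(a, b)]) ++ r2) (by simp) (isWalk_append hw1 hr2)
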